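/- For every natural number n ≥ 1, the n-th derivative of the logistic function σ tends to 0 as x → +∞ and as x → -∞. -/

import Mathlib

open Filter

/-- The logistic function. -/
noncomputable def logistic (x : ℝ) : ℝ := 1 / (1 + Real.exp (-x))

lemma one_add_exp_ne (x : ℝ) : (1 : ℝ) + Real.exp (-x) ≠ 0 := by
  positivity

lemma logistic_eq : logistic = fun y : ℝ => (1 + Real.exp (-y))⁻¹ := by
  funext y; simp [logistic, one_div]

lemma logistic_hasDerivAt (x : ℝ) :
    HasDerivAt logistic (logistic x - (logistic x) ^ 2) x := by
  have h1 : HasDerivAt (fun y : ℝ => 1 + Real.exp (-y)) (-Real.exp (-x)) x := by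
    simpa using (((Real.hasDerivAt_exp (-x)).comp x ((hasDerivAt_id x).neg)).const_add 1)
  have h2 := h1.inv (one_add_exp_ne x)
  have : HasDerivAt logistic (-(-Real.exp (-x)) / (1 + Real.exp (-x)) ^ 2) x := by
    rw [logistic_eq]; simpa [Pi.inv_def] using h2
  convert this using 1
  have hne := one_add_exp_ne x
  simp only [logistic]
  field_simp
  ring

lemma key (n : ℕ) : ∃ p : Polynomial ℝ, p.eval 0 = 0 ∧ p.eval 1 = 0 ∧
    iteratedDeriv (n + 1) logistic = fun x => p.eval (logistic x) := by
  induction n with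
  | zero =>
    refine ⟨Polynomial.X - Polynomial.X ^ 2, by simp, by simp, ?_⟩
    funext x
    simp [iteratedDeriv_one, (logistic_hasDerivAt x).deriv]
  | succ n ih =>
    obtain ⟨p, h0, h1, hp⟩ := ih
    refine ⟨p.derivative * (Polynomial.X - Polynomial.X ^ 2), by simp, by simp, ?_⟩
    funext x
    rw [iteratedDeriv_succ, hp]
    have := ((p.hasDerivAt (logistic x)).comp x (logistic_hasDerivAt x)).deriv
    simp only [Function.comp_def] at this
    rw [this]
    simp [mul_comm]

lemma logistic_tendsto_atTop : Tendsto logistic atTop (nhds 1) := by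
  have h : Tendsto (fun x : ℝ => 1 + Real.exp (-x)) atTop (nhds (1 + 0)) :=
    tendsto_const_nhds.add (Real.tendsto_exp_atBot.comp tendsto_neg_atTop_atBot)
  rw [logistic_eq]
  simpa using (h.inv₀ (by norm_num))

lemma logistic_tendsto_atBot : Tendsto logistic atBot (nhds 0) := by
  have h : Tendsto (fun x : ℝ => 1 + Real.exp (-x)) atBot atTop := by
    apply tendsto_atTop_add_const_left
    exact Real.tendsto_exp_atTop.comp tendsto_neg_atBot_atTop
  rw [logistic_eq]
  simpa [Pi.inv_def] using h.inv_tendsto_atTop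

theorem stmt_13 (n : ℕ) (hn : 1 ≤ n) :
    Tendsto (iteratedDeriv n logistic) atTop (nhds 0) ∧
    Tendsto (iteratedDeriv n logistic) atBot (nhds 0) := by
  obtain ⟨m, rfl⟩ : ∃ m, n = m + 1 := ⟨n - 1, (Nat.succ_pred_eq_of_pos hn).symm⟩
  obtain ⟨p, h0, h1, hp⟩ := key m
  rw [hp]
  constructor
  · have := (p.continuous_aeval.tendsto 1).comp logistic_tendsto_atTop
    simpa [Function.comp_def, h1] using this
  · have := (p.continuous_aeval.tendsto 0).comp logistic_tendsto_atBot
    simpa [Function.comp_def, h0] using this
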